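/- Let Ā ∈ {0,*}^{n×n} be a structural pattern whose state digraph D(Ā) = (X, E) is strongly connected, and suppose the bipartite graph B(X, X, E) admits a perfect matching. Then the minimum number of dedicated inputs p for which there exists a dedicated input pattern B̄ ∈ {0,*}^{n×p} with (Ā, B̄) structurally controllable equals 1. -/

import Mathlib

/-- A real matrix `A` realizes the Boolean structural pattern `P` if `A` vanishes
wherever `P` is zero (`false`). -/
def Realizes {m k : ℕ} (A : Matrix (Fin m) (Fin k) ℝ) (P : Matrix (Fin m) (Fin k) Bool) : Prop :=
  ∀ i j, P i j = false → A i j = 0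

/-- The controllability matrix `[B, AB, …, A^{n-1}B]`. -/
def ctrbMatrix {n p : ℕ} (A : Matrix (Fin n) (Fin n) ℝ) (B : Matrix (Fin n) (Fin p) ℝ) :
    Matrix (Fin n) (Fin n × Fin p) ℝ :=
  Matrix.of fun i jk => (A ^ (jk.1 : ℕ) * B) i jk.2

/-- Structural controllability of a pair of patterns `(Ā, B̄)`: some realization
has full-rank controllability matrix. -/
def StructurallyControllable {n p : ℕ} (Ab : Matrix (Fin n) (Fin n) Bool)
    (Bb : Matrix (Fin n) (Fin p) Bool) : Prop :=
  ∃ (A : Matrix (Fin n) (Fin n) ℝ) (B : Matrix (Fin n) (Fin p) ℝ),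
    Realizes A Ab ∧ Realizes B Bb ∧ (ctrbMatrix A B).rank = n

/-- A dedicated input pattern: every column has exactly one nonzero entry. -/
def Dedicated {n p : ℕ} (Bb : Matrix (Fin n) (Fin p) Bool) : Prop :=
  ∀ j, ∃! i, Bb i j = true

/-- Edge `x_j → x_i` of the state digraph `D(Ā)` (present iff `Ā_{ij} ≠ 0`). -/
def stateEdge {n : ℕ} (Ab : Matrix (Fin n) (Fin n) Bool) (j i : Fin n) : Prop :=
  Ab i j = true

/-- Edge set of the bipartite graph `B(X, X, E)` associated with `D(Ā)`:
`(j, i)` is an edge from left `x_j` to right `x_i` iff `x_j → x_i` in `D(Ā)`. -/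
def stateEdgeFinset {n : ℕ} (Ab : Matrix (Fin n) (Fin n) Bool) : Finset (Fin n × Fin n) :=
  Finset.univ.filter fun e => Ab e.2 e.1 = true

/-- A matching of a bipartite graph with edge set `E`: a subset of `E` in which
no two edges share a left endpoint or share a right endpoint. -/
def IsMatching {α β : Type*} (E M : Finset (α × β)) : Prop :=
  M ⊆ E ∧ (∀ e ∈ M, ∀ f ∈ M, e.1 = f.1 → e = f) ∧ ∀ e ∈ M, ∀ f ∈ M, e.2 = f.2 → e = f

/-- A maximum matching: a matching of maximum cardinality. -/
def IsMaxMatching {α β : Type*} (E M : Finset (α × β)) : Prop :=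
  IsMatching E M ∧ ∀ M', IsMatching E M' → M'.card ≤ M.card

/-- `v` is a right-unmatched vertex with respect to the matching `M`. -/
def RightUnmatched {α β : Type*} (M : Finset (α × β)) (v : β) : Prop :=
  ∀ e ∈ M, e.2 ≠ v

/-- The set of right-unmatched vertices of `M`. -/
def unmatchedSet {α β : Type*} (M : Finset (α × β)) : Set β :=
  {v | RightUnmatched M v}

/-- The tip (last vertex) of the path `r :: l`. -/
def stemTip {V : Type*} (r : V) (l : List V) : V :=
  (r :: l).getLast (List.cons_ne_nil r l)

/-- `r :: l` is a state stem: a simple directed path (possibly a single vertex)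
with root `r` and tip `stemTip r l`. -/
def IsStem {V : Type*} (edge : V → V → Prop) (r : V) (l : List V) : Prop :=
  (r :: l).Nodup ∧ List.Chain edge r l

/-- `r :: l` is a simple directed cycle (a self-loop when `l = []`). -/
def IsCycle {V : Type*} (edge : V → V → Prop) (r : V) (l : List V) : Prop :=
  IsStem edge r l ∧ edge (stemTip r l) r

/-- The (directed) edges of the stem `r :: l`. -/
def stemEdges {V : Type*} (r : V) (l : List V) : List (V × V) :=
  (r :: l).zip l

/-- The (directed) edges of the cycle `r :: l`, including the closing edge. -/
def cycleEdges {V : Type*} (r : V) (l : List V) : List (V × V) :=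
  (r :: l).zip (l ++ [r])

/-- The vertices of a stem/cycle encoded as a pair (root, remaining vertices). -/
def pieceVerts {V : Type*} (s : V × List V) : List V :=
  s.1 :: s.2

/-- Reachability (by a directed path) in a digraph. -/
def Reach {V : Type*} (edge : V → V → Prop) : V → V → Prop :=
  Relation.ReflTransGen edge

/-- `S` is a strongly connected component: a nonempty set of mutually reachable
vertices that is maximal with this property. -/
def IsSCC {V : Type*} (edge : V → V → Prop) (S : Set V) : Prop :=
  S.Nonempty ∧ (∀ v ∈ S, ∀ w ∈ S, Reach edge v w) ∧
    ∀ v ∈ S, ∀ w, Reach edge v w → Reach edge w v → w ∈ S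

/-- A non-top-linked SCC: an SCC with no edge entering it from outside. -/
def IsNonTopLinkedSCC {V : Type*} (edge : V → V → Prop) (S : Set V) : Prop :=
  IsSCC edge S ∧ ∀ a b, edge a b → b ∈ S → a ∈ S

/-- `β`: the number of non-top-linked SCCs of `D(Ā)`. -/
noncomputable def numNonTopSCC {n : ℕ} (Ab : Matrix (Fin n) (Fin n) Bool) : ℕ :=
  Set.ncard {S : Set (Fin n) | IsNonTopLinkedSCC (stateEdge Ab) S}

/-- The number of non-top-linked SCCs of `D(Ā)` that are top assignable w.r.t. `M`,
i.e. contain a right-unmatched vertex of `M`. -/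
noncomputable def assignIdx {n : ℕ} (Ab : Matrix (Fin n) (Fin n) Bool) (M : Finset (Fin n × Fin n)) : ℕ :=
  Set.ncard {S : Set (Fin n) | IsNonTopLinkedSCC (stateEdge Ab) S ∧ ∃ v ∈ S, RightUnmatched M v}

/-- `α`: the maximum assignability index, the maximum over all maximum matchings of
the number of top assignable non-top-linked SCCs. -/
noncomputable def maxAssignIdx {n : ℕ} (Ab : Matrix (Fin n) (Fin n) Bool) : ℕ :=
  sSup {k | ∃ M, IsMaxMatching (stateEdgeFinset Ab) M ∧ assignIdx Ab M = k}

/-- The minimum number of dedicated inputs rendering the pattern structurally controllable. -/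
noncomputable def minDedicatedInputs {n : ℕ} (Ab : Matrix (Fin n) (Fin n) Bool) : ℕ :=
  sInf {p : ℕ | ∃ Bb : Matrix (Fin n) (Fin p) Bool, Dedicated Bb ∧ StructurallyControllable Ab Bb}


namespace SCPM
open Finset Equiv

variable {n : ℕ}

lemma exists_pow_fix (π : Equiv.Perm (Fin n)) (i : Fin n) : ∃ k, 0 < k ∧ (π ^ k) i = i :=
  ⟨orderOf π, orderOf_pos π, by rw [pow_orderOf_eq_one]; rfl⟩

noncomputable def per (π : Equiv.Perm (Fin n)) (i : Fin n) : ℕ := Nat.find (exists_pow_fix π i)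

lemma per_pos (π : Equiv.Perm (Fin n)) (i : Fin n) : 0 < per π i :=
  (Nat.find_spec (exists_pow_fix π i)).1

lemma pow_per (π : Equiv.Perm (Fin n)) (i : Fin n) : (π ^ per π i) i = i :=
  (Nat.find_spec (exists_pow_fix π i)).2

lemma fix_pow {π : Equiv.Perm (Fin n)} {i : Fin n} (h : π i = i) (q : ℕ) : (π ^ q) i = i := by
  induction q with
  | zero => rfl
  | succ q ih => rw [pow_succ, Equiv.Perm.mul_apply, h, ih]

lemma pow_fix_iff (π : Equiv.Perm (Fin n)) (i : Fin n) (k : ℕ) :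
    (π ^ k) i = i ↔ per π i ∣ k := by
  constructor
  · intro h
    rcases Nat.eq_zero_or_pos (k % per π i) with hs | hs
    · exact Nat.dvd_of_mod_eq_zero hs
    · exfalso
      have hk : (π ^ (k % per π i)) i = i := by
        have hd : (π ^ (per π i * (k / per π i))) i = i := by
          rw [pow_mul]; exact fix_pow (pow_per π i) _
        have := Nat.mod_add_div k (per π i)
        calc (π ^ (k % per π i)) i = (π ^ (k % per π i)) ((π ^ (per π i * (k / per π i))) i) := by
              rw [hd]
          _ = (π ^ (k % per π i + per π i * (k / per π i))) i := by
              rw [pow_add, Equiv.Perm.mul_apply]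
          _ = i := by rw [this, h]
      exact Nat.find_min (exists_pow_fix π i) (Nat.mod_lt _ (per_pos π i)) ⟨hs, hk⟩
  · rintro ⟨q, rfl⟩
    rw [pow_mul]; exact fix_pow (pow_per π i) _

lemma fix_iff_of_sameCycle {π : Equiv.Perm (Fin n)} {i j : Fin n} (h : π.SameCycle i j) (k : ℕ) :
    ((π ^ k) i = i) ↔ ((π ^ k) j = j) := by
  obtain ⟨z, rfl⟩ := h
  have hcomm : ∀ x, (π ^ k) ((π ^ z) x) = (π ^ z) ((π ^ k) x) := by
    intro x
    have : (π ^ (k : ℤ)) * (π ^ z) = (π ^ z) * (π ^ (k : ℤ)) := by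
      rw [← zpow_add, ← zpow_add, add_comm]
    calc (π ^ k) ((π ^ z) x) = ((π ^ (k : ℤ)) * (π ^ z)) x := by
          rw [zpow_natCast]; rfl
      _ = ((π ^ z) * (π ^ (k : ℤ))) x := by rw [this]
      _ = (π ^ z) ((π ^ k) x) := by rw [← zpow_natCast π k]; rfl
  rw [hcomm]
  exact ⟨fun h' => by simpa using h', fun h' => by
    have := (Equiv.apply_eq_iff_eq (π ^ z)).2 h'; simpa using h'⟩

lemma per_eq_of_sameCycle {π : Equiv.Perm (Fin n)} {i j : Fin n} (h : π.SameCycle i j) :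
    per π i = per π j := by
  apply le_antisymm
  · exact Nat.find_le ⟨per_pos π j, (fix_iff_of_sameCycle h _).2 (pow_per π j)⟩
  · exact Nat.find_le ⟨per_pos π i, (fix_iff_of_sameCycle h _).1 (pow_per π i)⟩

lemma inv_pow_fix_iff (π : Equiv.Perm (Fin n)) (i : Fin n) (k : ℕ) :
    ((π⁻¹ ^ k) i = i) ↔ ((π ^ k) i = i) := by
  rw [inv_pow]
  constructor
  · intro h; conv_lhs => rw [← h]
    simp
  · intro h; conv_lhs => rw [← h]; simp

lemma inv_pow_per (π : Equiv.Perm (Fin n)) (i : Fin n) : (π⁻¹ ^ per π i) i = i :=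
  (inv_pow_fix_iff π i _).2 (pow_per π i)

/-- points on the backward orbit are on the same cycle -/
lemma sameCycle_inv_pow (π : Equiv.Perm (Fin n)) (j : Fin n) (a : ℕ) :
    π.SameCycle j ((π⁻¹ ^ a) j) :=
  ⟨-(a : ℤ), by rw [zpow_neg, zpow_natCast, ← inv_pow]⟩

/-- existence of a backward exponent below the period -/
lemma exists_inv_pow_lt_per {π : Equiv.Perm (Fin n)} {j u : Fin n} (h : π.SameCycle j u) :
    ∃ a < per π j, (π⁻¹ ^ a) j = u := by
  obtain ⟨b, _, hb⟩ := (Equiv.Perm.sameCycle_inv.2 h).exists_pow_eq'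
  set c := per π j with hc
  have hcpos := per_pos π j
  refine ⟨b % c, Nat.mod_lt _ hcpos, ?_⟩
  have hd : (π⁻¹ ^ (c * (b / c))) j = j := by
    rw [pow_mul]; exact fix_pow (inv_pow_per π j) _
  calc (π⁻¹ ^ (b % c)) j = (π⁻¹ ^ (b % c)) ((π⁻¹ ^ (c * (b / c))) j) := by rw [hd]
    _ = (π⁻¹ ^ (b % c + c * (b / c))) j := by rw [pow_add, Equiv.Perm.mul_apply]
    _ = u := by rw [Nat.mod_add_div b c, hb]

lemma inv_pow_inj_lt_per {π : Equiv.Perm (Fin n)} {j : Fin n} {a b : ℕ}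
    (ha : a < per π j) (hb : b < per π j) (h : (π⁻¹ ^ a) j = (π⁻¹ ^ b) j) : a = b := by
  wlog hab : a ≤ b generalizing a b
  · exact (this hb ha h.symm (le_of_not_ge hab)).symm
  by_contra hne
  have hlt : 0 < b - a := by omega
  have : (π⁻¹ ^ (b - a)) ((π⁻¹ ^ a) j) = (π⁻¹ ^ a) j := by
    rw [← Equiv.Perm.mul_apply, ← pow_add]
    rw [Nat.sub_add_cancel hab, ← h]
  -- turn into a fixed point of j itself via per equality on same cycle
  have hsc : π.SameCycle j ((π⁻¹ ^ a) j) := sameCycle_inv_pow π j a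
  have hper : per π ((π⁻¹ ^ a) j) = per π j := (per_eq_of_sameCycle hsc).symm
  have hfix : (π ^ (b - a)) ((π⁻¹ ^ a) j) = (π⁻¹ ^ a) j :=
    (inv_pow_fix_iff π _ _).1 this
  have hdvd := (pow_fix_iff π _ _).1 hfix
  rw [hper] at hdvd
  have := Nat.le_of_dvd hlt hdvd
  omega


variable {n : ℕ}

def Orb (π : Equiv.Perm (Fin n)) (i : Fin n) : Finset (Fin n) :=
  univ.filter (π.SameCycle i)

lemma mem_Orb {π : Equiv.Perm (Fin n)} {i j : Fin n} : j ∈ Orb π i ↔ π.SameCycle i j := by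
  simp [Orb]

lemma Orb_nonempty (π : Equiv.Perm (Fin n)) (i : Fin n) : (Orb π i).Nonempty :=
  ⟨i, mem_Orb.2 (Equiv.Perm.SameCycle.refl π i)⟩

lemma Orb_eq_of_sameCycle {π : Equiv.Perm (Fin n)} {i j : Fin n} (h : π.SameCycle i j) :
    Orb π i = Orb π j := by
  ext x; simp only [mem_Orb]
  exact ⟨fun hx => h.symm.trans hx, fun hx => h.trans hx⟩

noncomputable def rep (π : Equiv.Perm (Fin n)) (i : Fin n) : Fin n :=
  (Orb π i).min' (Orb_nonempty π i)

lemma sameCycle_rep (π : Equiv.Perm (Fin n)) (i : Fin n) : π.SameCycle i (rep π i) :=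
  mem_Orb.1 ((Orb π i).min'_mem (Orb_nonempty π i))

lemma rep_eq_of_sameCycle {π : Equiv.Perm (Fin n)} {i j : Fin n} (h : π.SameCycle i j) :
    rep π i = rep π j := by
  unfold rep; congr 1; exact Orb_eq_of_sameCycle h

lemma sameCycle_of_rep_eq {π : Equiv.Perm (Fin n)} {i j : Fin n} (h : rep π i = rep π j) :
    π.SameCycle i j :=
  (sameCycle_rep π i).trans (h ▸ (sameCycle_rep π j).symm)

lemma rep_rep (π : Equiv.Perm (Fin n)) (i : Fin n) : rep π (rep π i) = rep π i :=
  (rep_eq_of_sameCycle (sameCycle_rep π i)).symm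

noncomputable def treal (π : Equiv.Perm (Fin n)) (i : Fin n) : ℝ :=
  ((rep π i : ℕ) : ℝ) + 1

lemma treal_pos (π : Equiv.Perm (Fin n)) (i : Fin n) : 0 < treal π i := by
  unfold treal; positivity

lemma treal_eq_of_sameCycle {π : Equiv.Perm (Fin n)} {i j : Fin n} (h : π.SameCycle i j) :
    treal π i = treal π j := by
  unfold treal; rw [rep_eq_of_sameCycle h]

lemma sameCycle_of_treal_eq {π : Equiv.Perm (Fin n)} {i j : Fin n} (h : treal π i = treal π j) :
    π.SameCycle i j := by
  apply sameCycle_of_rep_eq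
  unfold treal at h
  have : ((rep π i : ℕ) : ℝ) = ((rep π j : ℕ) : ℝ) := by linarith
  exact Fin.ext (by exact_mod_cast this)

/-- representatives of non-root orbits -/
noncomputable def Reps (π : Equiv.Perm (Fin n)) (r : Fin n) : Finset (Fin n) :=
  univ.filter (fun o => rep π o = o ∧ ¬ π.SameCycle r o)

lemma mem_Reps {π : Equiv.Perm (Fin n)} {r o : Fin n} :
    o ∈ Reps π r ↔ rep π o = o ∧ ¬ π.SameCycle r o := by simp [Reps]

/-- the bridge input function -/
noncomputable def gfun (π : Equiv.Perm (Fin n)) (r : Fin n) (u w : Fin n → Fin n)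
    (v : Fin n → ℂ) (j : Fin n) : ℂ :=
  ∑ o ∈ Reps π r, if u o = j then v (w o) else 0

/-- telescoped eigen-relation along a backward orbit -/
lemma iter_formula (σ : Equiv.Perm (Fin n)) (v g : Fin n → ℂ) (lam t : ℂ) (j : Fin n)
    (hE : ∀ a : ℕ, lam * v ((σ ^ a) j) = t * v ((σ ^ (a + 1)) j) + g ((σ ^ a) j)) :
    ∀ k : ℕ, lam ^ k * v j =
      t ^ k * v ((σ ^ k) j) + ∑ a ∈ range k, lam ^ (k - 1 - a) * t ^ a * g ((σ ^ a) j) := by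
  intro k
  induction k with
  | zero => simp
  | succ k ih =>
    have h1 : lam ^ (k + 1) * v j = lam * (lam ^ k * v j) := by ring
    rw [h1, ih, mul_add]
    have h2 : lam * (t ^ k * v ((σ ^ k) j)) = t ^ k * (lam * v ((σ ^ k) j)) := by ring
    rw [h2, hE k, Finset.sum_range_succ, mul_add]
    have h3 : lam * ∑ a ∈ range k, lam ^ (k - 1 - a) * t ^ a * g ((σ ^ a) j)
        = ∑ a ∈ range k, lam ^ (k + 1 - 1 - a) * t ^ a * g ((σ ^ a) j) := by
      rw [Finset.mul_sum]
      apply Finset.sum_congr rfl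
      intro a ha
      have ha' : a < k := Finset.mem_range.1 ha
      have : k + 1 - 1 - a = (k - 1 - a) + 1 := by omega
      rw [this, pow_succ]
      ring
    rw [h3]
    have h4 : k + 1 - 1 - k = 0 := by omega
    rw [h4, pow_zero]
    ring

lemma closed_formula (σ : Equiv.Perm (Fin n)) (v g : Fin n → ℂ) (lam t : ℂ) (j : Fin n) (c : ℕ)
    (hc : (σ ^ c) j = j)
    (hE : ∀ a : ℕ, lam * v ((σ ^ a) j) = t * v ((σ ^ (a + 1)) j) + g ((σ ^ a) j)) :
    (lam ^ c - t ^ c) * v j = ∑ a ∈ range c, lam ^ (c - 1 - a) * t ^ a * g ((σ ^ a) j) := by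
  have := iter_formula σ v g lam t j hE c
  rw [hc] at this
  linear_combination this


lemma eigen_key (π : Equiv.Perm (Fin n)) (r : Fin n) (rk : Fin n → ℕ)
    (u w : Fin n → Fin n)
    (hrk : ∀ i j, π.SameCycle i j → rk i = rk j)
    (hbw : ∀ o, ¬ π.SameCycle r o → π.SameCycle o (w o))
    (hbr : ∀ o, ¬ π.SameCycle r o → rk (u o) < rk o)
    (lam : ℂ) (v : Fin n → ℂ)
    (hE : ∀ j, lam * v j = (treal π j : ℂ) * v (π⁻¹ j) + gfun π r u w v j)
    (hv : v ≠ 0) : v r ≠ 0 := by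
  classical
  have htne : ∀ j : Fin n, ((treal π j : ℂ)) ≠ 0 := fun j =>
    Complex.ofReal_ne_zero.2 (treal_pos π j).ne'
  -- eigen-relation along backward orbits
  have hEσ : ∀ (j : Fin n) (a : ℕ), lam * v ((π⁻¹ ^ a) j) =
      (treal π j : ℂ) * v ((π⁻¹ ^ (a + 1)) j) + gfun π r u w v ((π⁻¹ ^ a) j) := by
    intro j a
    have h1 := hE ((π⁻¹ ^ a) j)
    have ht : treal π ((π⁻¹ ^ a) j) = treal π j :=
      (treal_eq_of_sameCycle (sameCycle_inv_pow π j a)).symm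
    rw [ht] at h1
    have h2 : π⁻¹ ((π⁻¹ ^ a) j) = (π⁻¹ ^ (a + 1)) j := by
      rw [pow_succ']; rfl
    rwa [h2] at h1
  have CF : ∀ j : Fin n, (lam ^ per π j - (treal π j : ℂ) ^ per π j) * v j =
      ∑ a ∈ range (per π j),
        lam ^ (per π j - 1 - a) * (treal π j : ℂ) ^ a * gfun π r u w v ((π⁻¹ ^ a) j) :=
    fun j => closed_formula π⁻¹ v (gfun π r u w v) lam _ j (per π j) (inv_pow_per π j) (hEσ j)
  have DEAD : ∀ j : Fin n, (∀ j', π.SameCycle j j' → gfun π r u w v j' = 0) →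
      lam ^ per π j ≠ (treal π j : ℂ) ^ per π j → v j = 0 := by
    intro j hg hne
    have h1 := CF j
    rw [Finset.sum_eq_zero (fun a _ => by
      rw [hg _ (sameCycle_inv_pow π j a), mul_zero])] at h1
    rcases mul_eq_zero.1 h1 with h | h
    · exact absurd (sub_eq_zero.1 h) hne
    · exact h
  have LIVE : ∀ j u0 : Fin n, π.SameCycle j u0 → gfun π r u w v u0 ≠ 0 →
      (∀ j', π.SameCycle j j' → j' ≠ u0 → gfun π r u w v j' = 0) →
      lam ≠ 0 → lam ^ per π j ≠ (treal π j : ℂ) ^ per π j → v j ≠ 0 := by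
    intro j u0 hsc hgu hg0 hlam hne
    obtain ⟨a0, ha0lt, ha0⟩ := exists_inv_pow_lt_per hsc
    have hsum : ∑ a ∈ range (per π j),
        lam ^ (per π j - 1 - a) * (treal π j : ℂ) ^ a * gfun π r u w v ((π⁻¹ ^ a) j)
        = lam ^ (per π j - 1 - a0) * (treal π j : ℂ) ^ a0 * gfun π r u w v u0 := by
      have hterm : ∀ b ∈ range (per π j), b ≠ a0 →
          lam ^ (per π j - 1 - b) * (treal π j : ℂ) ^ b * gfun π r u w v ((π⁻¹ ^ b) j) = 0 := by
        intro b hb hbne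
        have hb' : b < per π j := Finset.mem_range.1 hb
        have hne' : (π⁻¹ ^ b) j ≠ u0 := fun h =>
          hbne (inv_pow_inj_lt_per hb' ha0lt (h.trans ha0.symm))
        rw [hg0 _ (sameCycle_inv_pow π j b) hne', mul_zero]
      rw [Finset.sum_eq_single a0 hterm (fun h => absurd (Finset.mem_range.2 ha0lt) h), ha0]
    have h1 := CF j
    rw [hsum] at h1
    intro hvj
    rw [hvj, mul_zero] at h1
    exact (mul_ne_zero (mul_ne_zero (pow_ne_zero _ hlam) (pow_ne_zero _ (htne j))) hgu) h1.symm
  -- choose a support element of maximal rank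
  have hsne : (univ.filter (fun i => v i ≠ 0)).Nonempty := by
    obtain ⟨i, hi⟩ := Function.ne_iff.1 hv
    exact ⟨i, Finset.mem_filter.2 ⟨mem_univ _, hi⟩⟩
  obtain ⟨i0, hi0mem, hi0max⟩ := Finset.exists_max_image _ rk hsne
  have hvi0 : v i0 ≠ 0 := (Finset.mem_filter.1 hi0mem).2
  have hmax : ∀ i, v i ≠ 0 → rk i ≤ rk i0 := fun i hi =>
    hi0max i (Finset.mem_filter.2 ⟨mem_univ _, hi⟩)
  -- Step A : bridge terms vanish on the orbit of i0
  have hgA : ∀ j, π.SameCycle i0 j → gfun π r u w v j = 0 := by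
    intro j hscj
    apply Finset.sum_eq_zero
    intro o ho
    rcases mem_Reps.1 ho with ⟨hrep, hro⟩
    by_cases huo : u o = j
    · rw [if_pos huo]
      by_contra hwo
      have h1 : rk (w o) = rk o := (hrk _ _ (hbw o hro)).symm
      have h2 : rk (u o) < rk o := hbr o hro
      have h3 : rk j = rk i0 := (hrk _ _ hscj).symm
      have h4 := hmax _ hwo
      rw [huo] at h2
      omega
    · rw [if_neg huo]
  -- Step B : modulus of lam
  have hB : lam ^ per π i0 = (treal π i0 : ℂ) ^ per π i0 := by
    have h1 := CF i0
    rw [Finset.sum_eq_zero (fun a _ => by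
      rw [hgA _ (sameCycle_inv_pow π i0 a), mul_zero])] at h1
    rcases mul_eq_zero.1 h1 with h | h
    · exact sub_eq_zero.1 h
    · exact absurd h hvi0
  have hpowinj : ∀ (x y : ℝ) (c : ℕ), 0 ≤ x → 0 ≤ y → c ≠ 0 → x ^ c = y ^ c → x = y := by
    intro x y c hx hy hc h
    rcases lt_trichotomy x y with hl | he | hl
    · exfalso; have := pow_lt_pow_left₀ hl hx hc; linarith
    · exact he
    · exfalso; have := pow_lt_pow_left₀ hl hy hc; linarith
  have habs : ‖lam‖ = treal π i0 := by
    have h1 := congrArg (fun z : ℂ => ‖z‖) hB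
    rw [norm_pow, norm_pow, Complex.norm_of_nonneg (treal_pos π i0).le] at h1
    exact hpowinj _ _ _ (norm_nonneg _) (treal_pos π i0).le (per_pos π i0).ne' h1
  have hlam0 : lam ≠ 0 := by
    intro h
    rw [h, norm_zero] at habs
    exact (treal_pos π i0).ne' habs.symm
  have hneq : ∀ j, ¬ π.SameCycle i0 j → lam ^ per π j ≠ (treal π j : ℂ) ^ per π j := by
    intro j hscj heq
    have h1 := congrArg (fun z : ℂ => ‖z‖) heq
    rw [norm_pow, norm_pow, Complex.norm_of_nonneg (treal_pos π j).le, habs] at h1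
    exact hscj (sameCycle_of_treal_eq
      (hpowinj _ _ _ (treal_pos π i0).le (treal_pos π j).le (per_pos π j).ne' h1))
  -- the ancestor chain
  set step : Fin n → Fin n := fun x => if π.SameCycle r x then x else u (rep π x) with hstepdef
  set chain : ℕ → Fin n := fun k => step^[k] i0 with hchaindef
  have hchain0 : chain 0 = i0 := rfl
  have hchainsucc : ∀ k, chain (k + 1) = step (chain k) := fun k =>
    Function.iterate_succ_apply' step k i0
  have hnotrep : ∀ x : Fin n, ¬ π.SameCycle r x → ¬ π.SameCycle r (rep π x) := by
    intro x hx h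
    exact hx (h.trans (sameCycle_rep π x).symm)
  have hrepmem : ∀ x : Fin n, ¬ π.SameCycle r x → rep π x ∈ Reps π r := fun x hx =>
    mem_Reps.2 ⟨rep_rep π x, hnotrep x hx⟩
  have hdecstep : ∀ x : Fin n, ¬ π.SameCycle r x → rk (u (rep π x)) < rk x := by
    intro x hx
    have h1 := hbr (rep π x) (hnotrep x hx)
    have h2 : rk x = rk (rep π x) := hrk _ _ (sameCycle_rep π x)
    omega
  have hKex : ∃ k, π.SameCycle r (chain k) := by
    by_contra hcon
    push_neg at hcon
    have hd : ∀ k, rk (chain k) + k ≤ rk i0 := by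
      intro k
      induction k with
      | zero => simp [hchain0]
      | succ k ih =>
        have h1 := hdecstep (chain k) (hcon k)
        have h2 : chain (k + 1) = u (rep π (chain k)) := by
          rw [hchainsucc, hstepdef]; exact if_neg (hcon k)
        rw [h2]
        omega
    have := hd (rk i0 + 1)
    omega
  set K := Nat.find hKex with hKdef
  have hK : π.SameCycle r (chain K) := Nat.find_spec hKex
  have hKmin : ∀ a, a < K → ¬ π.SameCycle r (chain a) := fun a ha => Nat.find_min hKex ha
  have hstepK : ∀ a, a < K → chain (a + 1) = u (rep π (chain a)) := by
    intro a ha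
    rw [hchainsucc, hstepdef]; exact if_neg (hKmin a ha)
  have hdec : ∀ a, a < K → rk (chain (a + 1)) < rk (chain a) := by
    intro a ha
    rw [hstepK a ha]; exact hdecstep _ (hKmin a ha)
  have hmono : ∀ a b, a < b → b ≤ K → rk (chain b) < rk (chain a) := by
    intro a b
    induction b with
    | zero => omega
    | succ b ih =>
      intro hab hbK
      have h1 := hdec b (by omega)
      rcases Nat.lt_or_ge a b with h | h
      · have := ih h (by omega); omega
      · have : a = b := by omega
        rw [this]; exact h1
  set IsAnc : Fin n → Prop := fun i => ∃ k ≤ K, π.SameCycle (chain k) i with hancdef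
  have hanc_i0 : IsAnc i0 := ⟨0, Nat.zero_le _, by rw [hchain0]⟩
  have hni0 : ∀ i, ¬ IsAnc i → ¬ π.SameCycle i0 i := by
    intro i hanc h
    exact hanc ⟨0, Nat.zero_le _, by rw [hchain0]; exact h⟩
  -- a bridge into an orbit of the chain identifies the next chain element
  have hancstep : ∀ (k : ℕ) (o : Fin n), k ≤ K → o ∈ Reps π r → π.SameCycle (chain k) o →
      k < K ∧ rep π (chain k) = o ∧ chain (k + 1) = u o := by
    intro k o hk ho hsc
    rcases mem_Reps.1 ho with ⟨hrep, hro⟩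
    have hkK : k < K := by
      rcases Nat.lt_or_ge k K with h | h
      · exact h
      · exfalso
        have hkeq : k = K := le_antisymm hk h
        rw [hkeq] at hsc
        exact hro (hK.trans hsc)
    have hrepeq : rep π (chain k) = o := by
      rw [rep_eq_of_sameCycle hsc, hrep]
    exact ⟨hkK, hrepeq, by rw [hstepK k hkK, hrepeq]⟩
  have hbridge_anc : ∀ i, ¬ IsAnc i → ∀ o ∈ Reps π r, ∀ j, π.SameCycle i j → u o = j →
      ¬ IsAnc (w o) ∧ rk i < rk (w o) := by
    intro i hanc o ho j hscij huoj
    constructor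
    · rintro ⟨k, hk, hscw⟩
      have hsco : π.SameCycle (chain k) o := hscw.trans (hbw o (mem_Reps.1 ho).2).symm
      obtain ⟨hkK, _, hc1⟩ := hancstep k o hk ho hsco
      exact hanc ⟨k + 1, hkK, by rw [hc1, huoj]; exact hscij.symm⟩
    · have h1 : rk (w o) = rk o := (hrk _ _ (hbw o (mem_Reps.1 ho).2)).symm
      have h2 := hbr o (mem_Reps.1 ho).2
      have h3 : rk (u o) = rk i := by rw [huoj]; exact (hrk _ _ hscij).symm
      omega
  set maxR := Finset.sup univ rk with hmaxR
  have hsup : ∀ i : Fin n, rk i ≤ maxR := fun i => Finset.le_sup (mem_univ i)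
  -- Step C : vanishing off the ancestor chain
  have hdead : ∀ d, ∀ i : Fin n, maxR ≤ rk i + d → ¬ IsAnc i → v i = 0 := by
    intro d
    induction d with
    | zero =>
      intro i hdi hanc
      apply DEAD i _ (hneq i (hni0 i hanc))
      intro j hscij
      apply Finset.sum_eq_zero
      intro o ho
      by_cases huo : u o = j
      · exfalso
        have h1 := (hbridge_anc i hanc o ho j hscij huo).2
        have h2 := hsup (w o)
        omega
      · rw [if_neg huo]
    | succ d ih =>
      intro i hdi hanc
      apply DEAD i _ (hneq i (hni0 i hanc))
      intro j hscij
      apply Finset.sum_eq_zero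
      intro o ho
      by_cases huo : u o = j
      · rw [if_pos huo]
        obtain ⟨hna, hlt⟩ := hbridge_anc i hanc o ho j hscij huo
        rw [ih (w o) (by omega) hna]
      · rw [if_neg huo]
  -- Step D : nonvanishing along the ancestor chain
  have hlive : ∀ k, k ≤ K → ∀ j, π.SameCycle (chain k) j → v j ≠ 0 := by
    intro k
    induction k with
    | zero =>
      intro _ j hscj
      rw [hchain0] at hscj
      obtain ⟨a, halt, ha⟩ := exists_inv_pow_lt_per hscj
      have hstepa : ∀ b : ℕ, v ((π⁻¹ ^ b) i0) ≠ 0 := by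
        intro b
        induction b with
        | zero => simpa using hvi0
        | succ b ihb =>
          have h1 := hEσ i0 b
          rw [hgA _ (sameCycle_inv_pow π i0 b), add_zero] at h1
          intro h0
          rw [h0, mul_zero] at h1
          exact (mul_ne_zero hlam0 ihb) h1
      rw [← ha]; exact hstepa a
    | succ k ih =>
      intro hk1 j hscj
      have hkK : k < K := hk1
      have hro : ¬ π.SameCycle r (chain k) := hKmin k hkK
      set o := rep π (chain k) with hodef
      have ho : o ∈ Reps π r := hrepmem _ hro
      have hchainu : chain (k + 1) = u o := by rw [hstepK k hkK]
      have hscwo : π.SameCycle (chain k) (w o) :=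
        (sameCycle_rep π (chain k)).trans (hbw o (mem_Reps.1 ho).2)
      have hvwo : v (w o) ≠ 0 := ih (le_of_lt hkK) (w o) hscwo
      -- values of g on the orbit of chain (k+1)
      have hgval : ∀ j', π.SameCycle (chain (k + 1)) j' →
          gfun π r u w v j' = if u o = j' then v (w o) else 0 := by
        intro j' hscj'
        apply Finset.sum_eq_single_of_mem o ho
        intro o' ho' hne'
        by_cases h : u o' = j'
        · rw [if_pos h]
          have hna : ¬ IsAnc (w o') := by
            rintro ⟨a, haK, hscw⟩
            have hsco' : π.SameCycle (chain a) o' := hscw.trans (hbw o' (mem_Reps.1 ho').2).symm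
            obtain ⟨haK', hrep', hca⟩ := hancstep a o' haK ho' hsco'
            have heqr : rk (chain (a + 1)) = rk (chain (k + 1)) := by
              rw [hca, h]
              exact (hrk _ _ hscj').symm
            have heq : a + 1 = k + 1 := by
              rcases Nat.lt_trichotomy (a + 1) (k + 1) with hh | hh | hh
              · have := hmono (a + 1) (k + 1) hh hk1; omega
              · exact hh
              · have := hmono (k + 1) (a + 1) hh haK'; omega
            have hak : a = k := by omega
            have : o' = o := by rw [← hrep', hodef, hak]
            exact hne' this
          rw [hdead maxR (w o') (by omega) hna]
        · rw [if_neg h]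
      -- conclude via LIVE for every vertex of this orbit
      have hsc_uo_j : π.SameCycle (u o) j := by rwa [hchainu] at hscj
      apply LIVE j (u o) hsc_uo_j.symm
      · rw [hgval (u o) (by rw [hchainu])]
        rw [if_pos rfl]
        exact hvwo
      · intro j' hscjj' hnej'
        rw [hgval j' (hscj.trans hscjj')]
        exact if_neg (fun h => hnej' h.symm)
      · exact hlam0
      · apply hneq
        intro hsci0j
        have h1 : rk (chain (k + 1)) < rk (chain 0) := hmono 0 (k + 1) (by omega) hk1
        have h2 : rk (chain (k + 1)) = rk j := hrk _ _ hscj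
        have h3 : rk i0 = rk j := hrk _ _ hsci0j
        rw [hchain0] at h1
        omega
  exact hlive K le_rfl r hK.symm
open scoped Matrix

/-- Full-rank Krylov criterion over ℂ via left eigenvectors. -/
lemma krylov_full (hn : 0 < n) (A : Matrix (Fin n) (Fin n) ℂ) (r : Fin n)
    (heig : ∀ (lam : ℂ) (v : Fin n → ℂ),
      (∀ j, ∑ i, A i j * v i = lam * v j) → v ≠ 0 → v r ≠ 0)
    (v : Fin n → ℂ) (hv : ∀ k, k < n → ∑ i, v i * (A ^ k) i r = 0) : v = 0 := by
  classical
  set W : Submodule ℂ (Fin n → ℂ) :=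
    { carrier := {x | ∀ k : ℕ, ∑ i, x i * (A ^ k) i r = 0}
      add_mem' := by
        intro a b ha hb k
        have := ha k; have := hb k
        simp only [Pi.add_apply, add_mul, Finset.sum_add_distrib]
        rw [ha k, hb k, add_zero]
      zero_mem' := by intro k; simp
      smul_mem' := by
        intro c x hx k
        simp only [Pi.smul_apply, smul_eq_mul, mul_assoc, ← Finset.mul_sum]
        rw [hx k, mul_zero] } with hWdef
  have hmemW : ∀ x : Fin n → ℂ, (∀ k, k < n → ∑ i, x i * (A ^ k) i r = 0) → x ∈ W := by
    intro x hx k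
    set p := Matrix.charpoly A with hp
    have hmonic : p.Monic := Matrix.charpoly_monic A
    have hrem : A ^ k = Polynomial.aeval A (Polynomial.X ^ k %ₘ p) := by
      have h1 : (Polynomial.X ^ k %ₘ p : Polynomial ℂ)
          = Polynomial.X ^ k - p * (Polynomial.X ^ k /ₘ p) :=
        Polynomial.modByMonic_eq_sub_mul_div _ p
      rw [h1, map_sub, map_mul, Matrix.aeval_self_charpoly, zero_mul, sub_zero,
        map_pow, Polynomial.aeval_X]
    have hdeg : (Polynomial.X ^ k %ₘ p).natDegree < n := by
      by_cases h0 : (Polynomial.X ^ k %ₘ p) = 0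
      · rw [h0]; simpa using hn
      · have hdlt : (Polynomial.X ^ k %ₘ p).degree < p.degree :=
          Polynomial.degree_modByMonic_lt _ hmonic
        have hpd : p.degree = (n : ℕ) := by
          rw [hp, Matrix.charpoly_degree_eq_dim]; simp
        rw [hpd] at hdlt
        exact (Polynomial.natDegree_lt_iff_degree_lt h0).2 hdlt
    have hsumrep : A ^ k = ∑ a ∈ Finset.range n, (Polynomial.X ^ k %ₘ p).coeff a • A ^ a := by
      rw [hrem, Polynomial.aeval_eq_sum_range' hdeg]
    rw [hsumrep]
    have hentry : ∀ i, (∑ a ∈ Finset.range n, (Polynomial.X ^ k %ₘ p).coeff a • A ^ a) i r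
        = ∑ a ∈ Finset.range n, (Polynomial.X ^ k %ₘ p).coeff a * (A ^ a) i r := by
      intro i
      rw [Matrix.sum_apply]
      apply Finset.sum_congr rfl
      intro a _
      simp [Matrix.smul_apply]
    calc ∑ i, x i * (∑ a ∈ Finset.range n, (Polynomial.X ^ k %ₘ p).coeff a • A ^ a) i r
        = ∑ i, ∑ a ∈ Finset.range n, (Polynomial.X ^ k %ₘ p).coeff a * (x i * (A ^ a) i r) := by
          apply Finset.sum_congr rfl
          intro i _
          rw [hentry i, Finset.mul_sum]
          apply Finset.sum_congr rfl
          intro a _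
          ring
      _ = ∑ a ∈ Finset.range n, (Polynomial.X ^ k %ₘ p).coeff a * ∑ i, x i * (A ^ a) i r := by
          rw [Finset.sum_comm]
          apply Finset.sum_congr rfl
          intro a _
          rw [Finset.mul_sum]
      _ = 0 := by
          apply Finset.sum_eq_zero
          intro a ha
          rw [hx a (Finset.mem_range.1 ha), mul_zero]
  -- W is invariant under multiplication by Aᵀ
  have hinv : ∀ x ∈ W, Matrix.mulVecLin (Aᵀ) x ∈ W := by
    intro x hx k
    have hxk := hx (k + 1)
    have : ∀ i, (Matrix.mulVecLin (Aᵀ) x) i = ∑ m, A m i * x m := by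
      intro i
      simp [Matrix.mulVecLin_apply, Matrix.mulVec, Matrix.vecMul, dotProduct,
        Matrix.transpose_apply, mul_comm]
    calc ∑ i, (Matrix.mulVecLin (Aᵀ) x) i * (A ^ k) i r
        = ∑ i, ∑ m, x m * (A m i * (A ^ k) i r) := by
          apply Finset.sum_congr rfl
          intro i _
          rw [this i, Finset.sum_mul]
          apply Finset.sum_congr rfl
          intro m _
          ring
      _ = ∑ m, x m * (A ^ (k + 1)) m r := by
          rw [Finset.sum_comm]
          apply Finset.sum_congr rfl
          intro m _
          rw [← Finset.mul_sum]
          congr 1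
          rw [pow_succ']
          simp [Matrix.mul_apply]
      _ = 0 := hxk
  -- W must be trivial
  have hWbot : W = ⊥ := by
    by_contra hne
    haveI : Nontrivial W := Submodule.nontrivial_iff_ne_bot.2 hne
    set T : Module.End ℂ W := (Matrix.mulVecLin (Aᵀ)).restrict hinv with hTdef
    obtain ⟨mu, hmu⟩ := Module.End.exists_eigenvalue T
    obtain ⟨x, hx⟩ := hmu.exists_hasEigenvector
    have hxne : (x : Fin n → ℂ) ≠ 0 := fun h => hx.2 (Subtype.coe_injective (by simpa using h))
    have hxeq : Matrix.mulVecLin (Aᵀ) (x : Fin n → ℂ) = mu • (x : Fin n → ℂ) := by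
      have h1 := hx.apply_eq_smul
      have h2 : ((T x : W) : Fin n → ℂ) = Matrix.mulVecLin (Aᵀ) (x : Fin n → ℂ) := rfl
      rw [h1] at h2
      simpa using h2.symm
    have hcoord : ∀ j, ∑ i, A i j * (x : Fin n → ℂ) i = mu * (x : Fin n → ℂ) j := by
      intro j
      have := congrFun hxeq j
      simp only [Matrix.mulVecLin_apply, Matrix.mulVec, dotProduct,
        Matrix.transpose_apply, Pi.smul_apply, smul_eq_mul] at this
      rw [← this]
    have hxr : (x : Fin n → ℂ) r ≠ 0 := heig mu _ hcoord hxne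
    have hx0 := x.2 0
    simp only [pow_zero] at hx0
    have : ∑ i, (x : Fin n → ℂ) i * (1 : Matrix (Fin n) (Fin n) ℂ) i r
        = (x : Fin n → ℂ) r := by
      rw [Finset.sum_eq_single r]
      · simp [Matrix.one_apply]
      · intro b _ hb; simp [Matrix.one_apply, hb]
      · intro h; exact absurd (Finset.mem_univ r) h
    rw [this] at hx0
    exact hxr hx0
  have := hmemW v hv
  rw [hWbot] at this
  simpa using this

def reachIn {α : Type*} (E : α → α → Prop) (r : α) : ℕ → α → Prop
  | 0, v => v = r
  | (k + 1), v => ∃ u, reachIn E r k u ∧ E u v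

lemma reach_exists {α : Type*} {E : α → α → Prop} {r v : α}
    (h : Relation.ReflTransGen E r v) : ∃ k, reachIn E r k v := by
  induction h with
  | refl => exact ⟨0, rfl⟩
  | tail _ hbc ih => obtain ⟨k, hk⟩ := ih; exact ⟨k + 1, _, hk, hbc⟩

end SCPM

/-- If `D(Ā)` is strongly connected and `B(X, X, E)` admits a perfect
matching, then the minimum number of dedicated inputs equals `1`. -/
theorem minDedicatedInputs_eq_one_of_stronglyConnected_perfectMatching
    {n : ℕ} (hn : 0 < n) (Ab : Matrix (Fin n) (Fin n) Bool)
    (hsc : ∀ v w : Fin n, Reach (stateEdge Ab) v w)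
    (hpm : ∃ M : Finset (Fin n × Fin n),
      IsMatching (stateEdgeFinset Ab) M ∧ ∀ v : Fin n, ∃ e ∈ M, e.2 = v) :
    minDedicatedInputs Ab = 1 := by
  classical
  -- extract the permutation from the perfect matching
  obtain ⟨M, hM, hMall⟩ := hpm
  choose e he hev using hMall
  have hinj : Function.Injective (fun i => (e i).1) := by
    intro i j hij
    have h1 := hM.2.1 _ (he i) _ (he j) hij
    rw [← hev i, ← hev j, h1]
  let π : Equiv.Perm (Fin n) := Equiv.ofBijective _ ((Finite.injective_iff_bijective).1 hinj)
  have hAbπ : ∀ i, Ab i (π i) = true := by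
    intro i
    have h1 : e i ∈ stateEdgeFinset Ab := hM.1 (he i)
    have h2 : Ab (e i).2 (e i).1 = true := (Finset.mem_filter.1 h1).2
    have h3 : π i = (e i).1 := rfl
    have h4 := h2
    rw [hev i] at h4
    rw [h3]
    exact h4
  set r : Fin n := ⟨0, hn⟩ with hrdef
  -- distances from the root
  have hreach : ∀ v : Fin n, ∃ k, SCPM.reachIn (stateEdge Ab) r k v := fun v =>
    SCPM.reach_exists (hsc r v)
  set dist : Fin n → ℕ := fun v => Nat.find (hreach v) with hdist
  set rk : Fin n → ℕ := fun i => (SCPM.Orb π i).inf' (SCPM.Orb_nonempty π i) dist with hrk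
  have hrkconst : ∀ i j, π.SameCycle i j → rk i = rk j := by
    intro i j h
    apply le_antisymm
    · exact Finset.le_inf' _ _ (fun b hb =>
        Finset.inf'_le _ (SCPM.mem_Orb.2 (h.trans (SCPM.mem_Orb.1 hb))))
    · exact Finset.le_inf' _ _ (fun b hb =>
        Finset.inf'_le _ (SCPM.mem_Orb.2 (h.symm.trans (SCPM.mem_Orb.1 hb))))
  have hrkle : ∀ i j, π.SameCycle i j → rk i ≤ dist j := fun i j h =>
    Finset.inf'_le _ (SCPM.mem_Orb.2 h)
  -- bridge edges into every non-root orbit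
  have hbex : ∀ o : Fin n, ¬ π.SameCycle r o →
      ∃ uu ww : Fin n, π.SameCycle o ww ∧ Ab ww uu = true ∧ rk uu < rk o := by
    intro o hro
    obtain ⟨j, hjmem, hjeq⟩ := Finset.exists_mem_eq_inf' (SCPM.Orb_nonempty π o) dist
    have hscj : π.SameCycle o j := SCPM.mem_Orb.1 hjmem
    have hrko : rk o = dist j := hjeq
    have hjr : j ≠ r := by
      rintro rfl
      exact hro hscj.symm
    have hd : SCPM.reachIn (stateEdge Ab) r (dist j) j := Nat.find_spec (hreach j)
    have hne0 : dist j ≠ 0 := by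
      intro h0
      rw [h0] at hd
      exact hjr hd
    obtain ⟨d', hdj⟩ := Nat.exists_eq_succ_of_ne_zero hne0
    rw [hdj] at hd
    obtain ⟨u', hu', hedge⟩ := hd
    have hdu' : dist u' ≤ d' := Nat.find_le hu'
    have hrku' : rk u' ≤ dist u' := hrkle u' u' (Equiv.Perm.SameCycle.refl π u')
    refine ⟨u', j, hscj, hedge, ?_⟩
    rw [hrko, hdj]
    omega
  have hbex' : ∀ o : Fin n, ∃ p : Fin n × Fin n, (¬ π.SameCycle r o →
      (π.SameCycle o p.2 ∧ Ab p.2 p.1 = true ∧ rk p.1 < rk o)) := by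
    intro o
    by_cases h : π.SameCycle r o
    · exact ⟨(o, o), fun h' => absurd h h'⟩
    · obtain ⟨uu, ww, h1, h2, h3⟩ := hbex o h
      exact ⟨(uu, ww), fun _ => ⟨h1, h2, h3⟩⟩
  choose p hbspec using hbex'
  set u : Fin n → Fin n := fun o => (p o).1 with hu
  set w : Fin n → Fin n := fun o => (p o).2 with hw
  -- the realization
  set A : Matrix (Fin n) (Fin n) ℝ := Matrix.of (fun i j =>
    (if j = π i then SCPM.treal π i else 0)
      + (((SCPM.Reps π r).filter (fun o => w o = i ∧ u o = j)).card : ℝ)) with hA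
  set B : Matrix (Fin n) (Fin 1) ℝ := Matrix.of (fun i _ => if i = r then (1 : ℝ) else 0) with hB
  set Bb : Matrix (Fin n) (Fin 1) Bool := Matrix.of (fun i _ => decide (i = r)) with hBb
  have hAentry : ∀ i j, A i j = (if j = π i then SCPM.treal π i else 0)
      + (((SCPM.Reps π r).filter (fun o => w o = i ∧ u o = j)).card : ℝ) := fun i j => rfl
  have hAreal : Realizes A Ab := by
    intro i j hfalse
    rw [hAentry]
    have h1 : ¬ (j = π i) := by
      intro h
      rw [h, hAbπ i] at hfalse
      exact absurd hfalse (by simp)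
    have h2 : ((SCPM.Reps π r).filter (fun o => w o = i ∧ u o = j)).card = 0 := by
      rw [Finset.card_eq_zero, Finset.filter_eq_empty_iff]
      rintro o ho ⟨hwo, huo⟩
      have hro := (SCPM.mem_Reps.1 ho).2
      have h3 : Ab (w o) (u o) = true := (hbspec o hro).2.1
      rw [hwo, huo] at h3
      rw [h3] at hfalse
      exact absurd hfalse (by simp)
    rw [if_neg h1, h2]
    simp
  -- complexification and its eigen-equations
  set Ac : Matrix (Fin n) (Fin n) ℂ := A.map (fun x => (x : ℂ)) with hAc
  have hcol : ∀ (v : Fin n → ℂ) (j : Fin n), ∑ i, Ac i j * v i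
      = (SCPM.treal π j : ℂ) * v (π⁻¹ j) + SCPM.gfun π r u w v j := by
    intro v j
    have hsplit : ∀ i : Fin n, Ac i j * v i
        = (if j = π i then (SCPM.treal π i : ℂ) else 0) * v i
          + (((SCPM.Reps π r).filter (fun o => w o = i ∧ u o = j)).card : ℂ) * v i := by
      intro i
      have : Ac i j = ((A i j : ℝ) : ℂ) := rfl
      rw [this, hAentry]
      push_cast
      by_cases h : j = π i
      · rw [if_pos h, if_pos h]; ring
      · rw [if_neg h, if_neg h]; simp
    rw [Finset.sum_congr rfl (fun i _ => hsplit i), Finset.sum_add_distrib]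
    congr 1
    · rw [Finset.sum_eq_single (π⁻¹ j)]
      · rw [if_pos (by simp),
          ← SCPM.treal_eq_of_sameCycle (show π.SameCycle j (π⁻¹ j) from ⟨-1, by simp⟩)]
      · intro b _ hb
        rw [if_neg (fun h => hb (by rw [h]; simp)), zero_mul]
      · intro h; exact absurd (Finset.mem_univ _) h
    · calc ∑ i, (((SCPM.Reps π r).filter (fun o => w o = i ∧ u o = j)).card : ℂ) * v i
          = ∑ i, ∑ _o ∈ (SCPM.Reps π r).filter (fun o => w o = i ∧ u o = j), v i := by
            apply Finset.sum_congr rfl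
            intro i _
            rw [Finset.sum_const, nsmul_eq_mul]
        _ = ∑ i, ∑ o ∈ SCPM.Reps π r, if w o = i ∧ u o = j then v i else 0 := by
            apply Finset.sum_congr rfl
            intro i _
            rw [Finset.sum_filter]
        _ = ∑ o ∈ SCPM.Reps π r, ∑ i, if w o = i ∧ u o = j then v i else 0 :=
            Finset.sum_comm
        _ = ∑ o ∈ SCPM.Reps π r, if u o = j then v (w o) else 0 := by
            apply Finset.sum_congr rfl
            intro o _
            by_cases h : u o = j
            · simp [h]
            · simp [h]
        _ = SCPM.gfun π r u w v j := rfl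
  have heig : ∀ (lam : ℂ) (v : Fin n → ℂ),
      (∀ j, ∑ i, Ac i j * v i = lam * v j) → v ≠ 0 → v r ≠ 0 := by
    intro lam v hveq hvne
    apply SCPM.eigen_key π r rk u w hrkconst
      (fun o ho => (hbspec o ho).1) (fun o ho => (hbspec o ho).2.2) lam v _ hvne
    intro j
    exact (hveq j).symm.trans (hcol v j)
  have hpowmap : ∀ k : ℕ, Ac ^ k = (A ^ k).map (fun x => (x : ℂ)) := by
    intro k
    induction k with
    | zero =>
      rw [pow_zero, pow_zero]
      ext i j
      simp [Matrix.map_apply, Matrix.one_apply]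
      split <;> simp
    | succ k ih =>
      rw [pow_succ, pow_succ, ih]
      ext i j
      simp only [Matrix.mul_apply, Matrix.map_apply]
      push_cast
      rfl
  -- the kernel of the transposed controllability matrix is trivial
  set Kc := ctrbMatrix A B with hKc
  have hKentry : ∀ (i : Fin n) (k : Fin n), Kc i (k, 0) = (A ^ (k : ℕ)) i r := by
    intro i k
    have h1 : Kc i (k, 0) = (A ^ (k : ℕ) * B) i 0 := rfl
    rw [h1, Matrix.mul_apply, Finset.sum_eq_single r]
    · have : B r 0 = 1 := by simp [hB]
      rw [this, mul_one]
    · intro b _ hb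
      have : B b 0 = 0 := by simp [hB, hb]
      rw [this, mul_zero]
    · intro h; exact absurd (Finset.mem_univ _) h
  have hker : ∀ x : Fin n → ℝ, Matrix.mulVecLin (Kc.transpose) x = 0 → x = 0 := by
    intro x hx
    have hxk : ∀ k : ℕ, k < n → ∑ i, x i * (A ^ k) i r = 0 := by
      intro k hkn
      have h1 := congrFun hx (⟨k, hkn⟩, 0)
      simp only [Matrix.mulVecLin_apply, Matrix.mulVec, dotProduct,
        Matrix.transpose_apply, Pi.zero_apply] at h1
      rw [← h1]
      apply Finset.sum_congr rfl
      intro i _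
      rw [hKentry i ⟨k, hkn⟩]
      ring
    have hxc : (fun i => ((x i : ℝ) : ℂ)) = 0 := by
      apply SCPM.krylov_full hn Ac r heig
      intro k hkn
      have h2 := hxk k hkn
      have h3 : ∑ i, ((x i : ℝ) : ℂ) * (Ac ^ k) i r
          = ((∑ i, x i * (A ^ k) i r : ℝ) : ℂ) := by
        rw [hpowmap k]
        push_cast [Matrix.map_apply]
        rfl
      rw [h3, h2]
      simp
    funext i
    have := congrFun hxc i
    simpa using this
  have hrankT : (Kc.transpose).rank = n := by
    have h1 := LinearMap.finrank_range_add_finrank_ker (Matrix.mulVecLin (Kc.transpose))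
    have h2 : LinearMap.ker (Matrix.mulVecLin (Kc.transpose)) = ⊥ :=
      LinearMap.ker_eq_bot'.2 (fun m hm => hker m hm)
    rw [h2, finrank_bot] at h1
    rw [Matrix.rank]
    simpa using h1
  have hrank : Kc.rank = n := by
    rw [← Matrix.rank_transpose]
    exact hrankT
  -- assemble
  have h1mem : (1 : ℕ) ∈ {p : ℕ | ∃ Bb' : Matrix (Fin n) (Fin p) Bool,
      Dedicated Bb' ∧ StructurallyControllable Ab Bb'} := by
    refine ⟨Bb, ?_, A, B, hAreal, ?_, hrank⟩
    · intro j
      refine ⟨r, by simp [hBb], fun i hi => by simpa [hBb] using hi⟩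
    · intro i j hfalse
      have : ¬ (i = r) := by simpa [hBb] using hfalse
      simp [hB, this]
  have h0mem : (0 : ℕ) ∉ {p : ℕ | ∃ Bb' : Matrix (Fin n) (Fin p) Bool,
      Dedicated Bb' ∧ StructurallyControllable Ab Bb'} := by
    rintro ⟨Bb', _, A', B', _, _, hrank'⟩
    have h1 : (ctrbMatrix A' B').rank ≤ Fintype.card (Fin n × Fin 0) :=
      Matrix.rank_le_card_width _
    simp only [Fintype.card_prod, Fintype.card_fin, mul_zero, Nat.le_zero] at h1
    rw [hrank'] at h1
    omega
  unfold minDedicatedInputs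
  refine le_antisymm (Nat.sInf_le h1mem) ?_
  rcases Nat.eq_zero_or_pos (sInf {p : ℕ | ∃ Bb' : Matrix (Fin n) (Fin p) Bool,
      Dedicated Bb' ∧ StructurallyControllable Ab Bb'}) with h | h
  · have hmem := Nat.sInf_mem (⟨1, h1mem⟩ : Set.Nonempty _)
    rw [h] at hmem
    exact absurd hmem h0mem
  · exact h
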